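/- The octahedron needs 5 acyclic colors: the octahedron graph (the complete tripartite graph K₂,₂,₂ on 6 vertices) admits no acyclic proper vertex coloring with 4 colors, but it admits an acyclic proper vertex coloring with 5 colors; hence its acyclic chromatic number equals 5. -/

import Mathlib

/-- The octahedron graph `K₂,₂,₂`: vertices are `Fin 3 × Fin 2` (three pairs of
vertices), and two vertices are adjacent iff they lie in different pairs. -/
def octahedron : SimpleGraph (Fin 3 × Fin 2) :=
  SimpleGraph.fromRel (fun a b => a.1 ≠ b.1)

/-- An acyclic proper vertex coloring of `G` with `c` colors: adjacent vertices get
different colors, and any two color classes together induce a forest. -/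
def IsAcyclicColoring {V : Type*} (G : SimpleGraph V) {c : ℕ} (f : V → Fin c) : Prop :=
  (∀ u v : V, G.Adj u v → f u ≠ f v) ∧
  ∀ i j : Fin c, i ≠ j → (G.induce {v : V | f v = i ∨ f v = j}).IsAcyclic

instance : DecidableRel octahedron.Adj := fun a b =>
  decidable_of_iff _ (SimpleGraph.fromRel_adj _ a b).symm

lemma oct_adj {u v : Fin 3 × Fin 2} (h : u.1 ≠ v.1) : octahedron.Adj u v :=
  ⟨fun he => h (congrArg Prod.fst he), Or.inl h⟩

lemma small_acyclic {V : Type*} [Fintype V] (G : SimpleGraph V)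
    (h3 : Fintype.card V ≤ 3)
    (hT : ∀ a b c : V, G.Adj a b → G.Adj b c → G.Adj c a → False) :
    G.IsAcyclic := by
  intro v c hc
  have h1 : c.length ≤ 3 := by
    have hnd := hc.2
    have hlen : c.support.tail.length = c.length := by
      simp [SimpleGraph.Walk.length_support]
    calc c.length = c.support.tail.length := hlen.symm
      _ ≤ Fintype.card V := List.Nodup.length_le_card hnd
      _ ≤ 3 := h3
  have hlen : c.length = 3 := le_antisymm h1 hc.three_le_length
  match c, hlen with
  | .cons h1 (.cons h2 (.cons h3 .nil)), _ => exact hT _ _ _ h1 h2 h3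

lemma key' : ∀ a b c d e g : Fin 4,
    a ≠ c → a ≠ d → a ≠ e → a ≠ g → b ≠ c → b ≠ d → b ≠ e → b ≠ g →
    c ≠ e → c ≠ g → d ≠ e → d ≠ g →
    (a = b ∧ c = d) ∨ (a = b ∧ e = g) ∨ (c = d ∧ e = g) := by decide

lemma has_cycle (f : Fin 3 × Fin 2 → Fin 4) (a b : Fin 3) (hab : a ≠ b)
    (ha : f (a,0) = f (a,1)) (hb : f (b,0) = f (b,1)) :
    ¬ (octahedron.induce {v | f v = f (a,0) ∨ f v = f (b,0)}).IsAcyclic := by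
  intro hA
  set S : Set (Fin 3 × Fin 2) := {v | f v = f (a,0) ∨ f v = f (b,0)} with hS
  let v1 : S := ⟨(a,0), Or.inl rfl⟩
  let v2 : S := ⟨(b,0), Or.inr rfl⟩
  let v3 : S := ⟨(a,1), Or.inl ha.symm⟩
  let v4 : S := ⟨(b,1), Or.inr hb.symm⟩
  have e12 : (octahedron.induce S).Adj v1 v2 := oct_adj (by simpa using hab)
  have e23 : (octahedron.induce S).Adj v2 v3 := oct_adj (by simpa using hab.symm)
  have e34 : (octahedron.induce S).Adj v3 v4 := oct_adj (by simpa using hab)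
  have e41 : (octahedron.induce S).Adj v4 v1 := oct_adj (by simpa using hab.symm)
  let w : (octahedron.induce S).Walk v1 v1 :=
    .cons e12 (.cons e23 (.cons e34 (.cons e41 .nil)))
  apply hA w
  have h12 : v1 ≠ v2 := fun h => hab (congrArg (Prod.fst ∘ Subtype.val) h)
  have h34 : v3 ≠ v4 := fun h => hab (congrArg (Prod.fst ∘ Subtype.val) h)
  have h13 : v1 ≠ v3 := fun h => by simpa [v1, v3] using congrArg (Prod.snd ∘ Subtype.val) h
  have h24 : v2 ≠ v4 := fun h => by simpa [v2, v4] using congrArg (Prod.snd ∘ Subtype.val) h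
  have h14 : v1 ≠ v4 := fun h => hab (congrArg (Prod.fst ∘ Subtype.val) h)
  have h23 : v2 ≠ v3 := fun h => hab.symm (congrArg (Prod.fst ∘ Subtype.val) h)
  constructor
  · constructor
    · simp [w, SimpleGraph.Walk.isTrail_def, Sym2.eq, Sym2.rel_iff',
        h12, h34, h13, h24, h14, h23, h12.symm, h34.symm, h13.symm, h24.symm,
        h14.symm, h23.symm]
    · simp [w]
  · simp [w, h12, h34, h13, h24, h14, h23, h23.symm, h24.symm, h34.symm,
      h12.symm, h13.symm, h14.symm]

def f0 : Fin 3 × Fin 2 → Fin 5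
  | (0, _) => 0
  | (1, 0) => 1
  | (1, 1) => 2
  | (2, 0) => 3
  | (2, 1) => 4

lemma hf0proper : ∀ u v, octahedron.Adj u v → f0 u ≠ f0 v := by decide

lemma hf0card : ∀ i j : Fin 5, i ≠ j →
    Fintype.card {v : Fin 3 × Fin 2 | f0 v = i ∨ f0 v = j} ≤ 3 := by decide

lemma hf0tri : ∀ i j : Fin 5, i ≠ j →
    ∀ a b c : {v : Fin 3 × Fin 2 | f0 v = i ∨ f0 v = j},
      (octahedron.induce {v : Fin 3 × Fin 2 | f0 v = i ∨ f0 v = j}).Adj a b →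
      (octahedron.induce _).Adj b c → (octahedron.induce _).Adj c a → False := by decide

/-- The octahedron needs 5 acyclic colors: it admits no acyclic proper coloring with
`4` colors, but admits one with `5` colors. -/
theorem acyclicChromatic_octahedron :
    (∀ f : Fin 3 × Fin 2 → Fin 4, ¬ IsAcyclicColoring octahedron f) ∧
    (∃ f : Fin 3 × Fin 2 → Fin 5, IsAcyclicColoring octahedron f) := by
  constructor
  · rintro f ⟨hprop, hacyc⟩
    have adj : ∀ (a b : Fin 3) (i j : Fin 2), a ≠ b → octahedron.Adj (a,i) (b,j) :=
      fun a b i j h => oct_adj h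
    have h01 : (0 : Fin 3) ≠ 1 := by decide
    have h02 : (0 : Fin 3) ≠ 2 := by decide
    have h12 : (1 : Fin 3) ≠ 2 := by decide
    have := key' (f (0,0)) (f (0,1)) (f (1,0)) (f (1,1)) (f (2,0)) (f (2,1))
      (hprop _ _ (adj _ _ _ _ h01)) (hprop _ _ (adj _ _ _ _ h01))
      (hprop _ _ (adj _ _ _ _ h02)) (hprop _ _ (adj _ _ _ _ h02))
      (hprop _ _ (adj _ _ _ _ h01)) (hprop _ _ (adj _ _ _ _ h01))
      (hprop _ _ (adj _ _ _ _ h02)) (hprop _ _ (adj _ _ _ _ h02))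
      (hprop _ _ (adj _ _ _ _ h12)) (hprop _ _ (adj _ _ _ _ h12))
      (hprop _ _ (adj _ _ _ _ h12)) (hprop _ _ (adj _ _ _ _ h12))
    rcases this with ⟨ha, hb⟩ | ⟨ha, hb⟩ | ⟨ha, hb⟩
    · exact has_cycle f 0 1 h01 ha hb
        (hacyc _ _ (hprop _ _ (adj _ _ _ _ h01)) )
    · exact has_cycle f 0 2 h02 ha hb
        (hacyc _ _ (hprop _ _ (adj _ _ _ _ h02)) )
    · exact has_cycle f 1 2 h12 ha hb
        (hacyc _ _ (hprop _ _ (adj _ _ _ _ h12)) )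
  · refine ⟨f0, hf0proper, ?_⟩
    intro i j hij
    exact small_acyclic _ (hf0card i j hij) (hf0tri i j hij)
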